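/- arXiv:0906.1023 — 7 statements merged into one kernel-verified Lean document; each statement's English description precedes it below -/
import Mathlib

section
/- If M is a direct sum of R-modules M_i over an infinite index set I, then M is a countable union of proper submodules. -/
theorem directSum_infinite_countable_union_proper_submodules
    {R : Type*} [CommRing R] {ι : Type*} [Infinite ι]
    (M : ι → Type*) [∀ i, AddCommGroup (M i)] [∀ i, Module R (M i)]
    [∀ i, Nontrivial (M i)] :
    ∃ C : ℕ → Submodule R (DirectSum ι M),
      (∀ n, C n ≠ ⊤) ∧ (⋃ n, (C n : Set (DirectSum ι M))) = Set.univ := by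
  classical
  let e : ℕ ↪ ι := Infinite.natEmbedding ι
  refine ⟨fun n => LinearMap.ker (DirectSum.component R ι M (e n)), ?_, ?_⟩
  · intro n h
    obtain ⟨m, hm⟩ := exists_ne (0 : M (e n))
    have hx : (DirectSum.lof R ι M (e n) m) ∈
        LinearMap.ker (DirectSum.component R ι M (e n)) := by
      rw [show LinearMap.ker (DirectSum.component R ι M (e n)) = ⊤ from h]
      exact Submodule.mem_top
    rw [LinearMap.mem_ker, DirectSum.component.lof_self] at hx
    exact hm hx
  · ext x
    simp only [Set.mem_iUnion, Set.mem_univ, iff_true, SetLike.mem_coe,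
      LinearMap.mem_ker]
    have hfin : (Set.range (fun n => e n) ∩ (x.support : Set ι)).Finite :=
      (x.support.finite_toSet).inter_of_right _
    have hinf : (Set.range (fun n => e n)).Infinite :=
      Set.infinite_range_of_injective e.injective
    obtain ⟨i, hi, hni⟩ := ((hinf.diff hfin).nonempty).imp (fun i h => h)
    obtain ⟨n, rfl⟩ := hi
    refine ⟨n, ?_⟩
    have : e n ∉ x.support := fun h => hni ⟨⟨n, rfl⟩, h⟩
    exact DFinsupp.notMem_support_iff.mp this
end

section
/- Let (R,m) be a local ring with residue field F = R/m, and let n be a positive integer with n ≤ |F| (n finite). Then no R-module M is the union of n proper R-submodules. -/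
private theorem avoidance_aux
    {R : Type*} [CommRing R] [IsLocalRing R]
    {M : Type*} [AddCommGroup M] [Module R M] :
    ∀ n : ℕ, 0 < n → ((n : Cardinal) ≤ Cardinal.mk (IsLocalRing.ResidueField R)) →
    ∀ C : Fin n → Submodule R M, (∀ i, C i ≠ ⊤) → (⋃ i, (C i : Set M)) ≠ Set.univ := by
  intro n
  induction n using Nat.strong_induction_on with
  | _ n ih =>
  intro hn hcard C hC hcover
  obtain ⟨m, rfl⟩ := Nat.exists_eq_succ_of_ne_zero hn.ne'
  have hmem : ∀ y : M, ∃ i, y ∈ C i := by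
    intro y
    have : y ∈ ⋃ i, (C i : Set M) := by rw [hcover]; exact Set.mem_univ y
    exact Set.mem_iUnion.mp this
  rcases Nat.eq_zero_or_pos m with rfl | hm
  · -- n = 1
    apply hC 0
    rw [Submodule.eq_top_iff']
    intro y
    obtain ⟨i, hi⟩ := hmem y
    exact (Subsingleton.elim i 0) ▸ hi
  by_cases hB : ∀ i, ∃ x, x ∈ C i ∧ ∀ j, j ≠ i → x ∉ C j
  · -- every submodule has a "private" point
    choose x hx1 hx2 using hB
    set i₀ : Fin (m + 1) := ⟨0, by omega⟩
    set i₁ : Fin (m + 1) := ⟨1, by omega⟩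
    have hne01 : i₀ ≠ i₁ := by simp [i₀, i₁, Fin.ext_iff]
    -- get representatives with pairwise-unit differences
    have hcard' : Nonempty (Fin (m + 1) ↪ IsLocalRing.ResidueField R) := by
      rw [← Cardinal.lift_mk_le']
      simpa [Cardinal.mk_fin] using hcard
    obtain ⟨e⟩ := hcard'
    choose f hf using fun k : Fin (m + 1) => IsLocalRing.residue_surjective (R := R) (e k)
    have hunit : ∀ k l : Fin (m + 1), k ≠ l → IsUnit (f k - f l) := by
      intro k l hkl
      rw [← IsLocalRing.residue_ne_zero_iff_isUnit, map_sub, hf, hf, sub_ne_zero]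
      exact fun h => hkl (e.injective h)
    set a : M := x i₀
    set b : M := x i₁
    set z : Fin (m + 1) → M := fun k => a + f k • b with hz
    choose g hg using fun k => hmem (z k)
    have hgne : ∀ k, g k ≠ i₁ := by
      intro k h
      have hzk : z k ∈ C i₁ := h ▸ hg k
      have hb : f k • b ∈ C i₁ := (C i₁).smul_mem _ (hx1 i₁)
      have ha : a ∈ C i₁ := by
        have := (C i₁).sub_mem hzk hb
        simpa [hz] using this
      exact hx2 i₀ i₁ hne01.symm ha
    have hginj : Function.Injective g := by
      intro k l hkl
      by_contra hne
      have h1 : z k - z l ∈ C (g k) := (C (g k)).sub_mem (hg k) (hkl ▸ hg l)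
      have h2 : (f k - f l) • b ∈ C (g k) := by
        have : z k - z l = (f k - f l) • b := by simp only [hz, sub_smul]; abel
        rwa [this] at h1
      obtain ⟨u, hu⟩ := hunit k l hne
      rw [← hu, ← Units.smul_def, Submodule.smul_mem_iff'] at h2
      exact hx2 i₁ (g k) (hgne k) h2
    have hgsurj : Function.Surjective g := Finite.surjective_of_injective hginj
    obtain ⟨k, hk⟩ := hgsurj i₁
    exact hgne k hk
  · -- some submodule is covered by the others: remove it and induct
    push_neg at hB
    obtain ⟨i, hi⟩ := hB
    apply ih m (Nat.lt_succ_self m) hm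
      (le_trans (by exact_mod_cast Nat.cast_le.mpr (Nat.le_succ m)) hcard)
      (fun j => C (i.succAbove j)) (fun j => hC _)
    rw [Set.eq_univ_iff_forall]
    intro y
    obtain ⟨j, hj⟩ := hmem y
    have : ∃ j', j' ≠ i ∧ y ∈ C j' := by
      rcases eq_or_ne j i with rfl | hji
      · obtain ⟨j', hj'1, hj'2⟩ := hi y hj
        exact ⟨j', hj'1, hj'2⟩
      · exact ⟨j, hji, hj⟩
    obtain ⟨j', hj'i, hj'⟩ := this
    obtain ⟨t, ht⟩ := Fin.exists_succAbove_eq hj'i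
    refine Set.mem_iUnion.mpr ⟨t, ?_⟩
    show y ∈ C (i.succAbove t)
    rw [ht]; exact hj'

theorem not_union_of_le_card_residueField_proper_submodules
    {R : Type*} [CommRing R] [IsLocalRing R]
    {M : Type*} [AddCommGroup M] [Module R M]
    (n : ℕ) (hn : 0 < n)
    (hcard : (n : Cardinal) ≤ Cardinal.mk (IsLocalRing.ResidueField R))
    (C : Fin n → Submodule R M) (hC : ∀ i, C i ≠ ⊤) :
    (⋃ i, (C i : Set M)) ≠ Set.univ :=
  avoidance_aux n hn hcard C hC
end

section
/- Let (R,m) be a local ring whose maximal ideal contains a non-zerodivisor p, and let M = ⨁_{n∈ℕ} R·m_n be a free module on countably many generators. Let N be the submodule generated by {m_n − p·m_{n+1} : n ∈ ℕ}. Then N is a proper submodule of M but N + mM = M. -/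
theorem counterexample_nakayama_not_fg
    {R : Type*} [CommRing R] [IsLocalRing R]
    (p : R) (hp : p ∈ IsLocalRing.maximalIdeal R) (hreg : p ∈ nonZeroDivisors R) :
    Submodule.span R (Set.range fun n : ℕ =>
        (Finsupp.single n (1 : R) - p • Finsupp.single (n + 1) (1 : R) : ℕ →₀ R)) ≠ ⊤ ∧
      Submodule.span R (Set.range fun n : ℕ =>
        (Finsupp.single n (1 : R) - p • Finsupp.single (n + 1) (1 : R) : ℕ →₀ R)) ⊔
        (IsLocalRing.maximalIdeal R) • (⊤ : Submodule R (ℕ →₀ R)) = ⊤ := by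
  constructor
  · -- N ≠ ⊤, via the linear map to the localization away from p sending mₙ ↦ p⁻ⁿ
    intro htop
    set L := Localization.Away p
    have hpow : Submonoid.powers p ≤ nonZeroDivisors R := by
      rintro x ⟨n, rfl⟩; exact pow_mem hreg n
    have hinj : Function.Injective (algebraMap R L) :=
      IsLocalization.injective L hpow
    have hne : (1 : L) ≠ 0 := by
      intro h
      have := hinj (by simpa using h : algebraMap R L 1 = algebraMap R L 0)
      simpa using this
    let v : ℕ → L := fun n => (IsLocalization.Away.invSelf p : L) ^ n
    let lam : (ℕ →₀ R) →ₗ[R] L := Finsupp.linearCombination R v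
    have hgen : ∀ n : ℕ,
        lam (Finsupp.single n (1 : R) - p • Finsupp.single (n + 1) (1 : R)) = 0 := by
      intro n
      have h1 : lam (Finsupp.single n (1 : R)) = v n := by
        simp [lam, Finsupp.linearCombination_single]
      have h2 : lam (Finsupp.single (n + 1) (1 : R)) = v (n + 1) := by
        simp [lam, Finsupp.linearCombination_single]
      rw [map_sub, map_smul, h1, h2]
      have : p • v (n + 1) = v n := by
        simp only [v, pow_succ, Algebra.smul_def]
        rw [← mul_assoc, mul_right_comm, IsLocalization.Away.mul_invSelf, one_mul]
      rw [this, sub_self]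
    have hzero : ∀ x : ℕ →₀ R, lam x = 0 := by
      intro x
      have hx : x ∈ Submodule.span R (Set.range fun n : ℕ =>
          (Finsupp.single n (1 : R) - p • Finsupp.single (n + 1) (1 : R) : ℕ →₀ R)) := by
        rw [htop]; trivial
      refine Submodule.span_induction ?_ (map_zero _) ?_ ?_ hx
      · rintro _ ⟨n, rfl⟩; exact hgen n
      · intro a b _ _ ha hb; rw [map_add, ha, hb, add_zero]
      · intro a x _ hx; rw [map_smul, hx, smul_zero]
    have := hzero (Finsupp.single 0 1)
    rw [show lam (Finsupp.single 0 (1 : R)) = v 0 by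
      simp [lam, Finsupp.linearCombination_single]] at this
    exact hne (by simpa [v] using this)
  · -- N + mM = ⊤
    rw [eq_top_iff]
    intro f _
    induction f using Finsupp.induction_linear with
    | zero => exact Submodule.zero_mem _
    | add a b ha hb => exact Submodule.add_mem _ (ha trivial) (hb trivial)
    | single a b =>
      have hsingle1 : ∀ n : ℕ, (Finsupp.single n (1 : R) : ℕ →₀ R) ∈
          Submodule.span R (Set.range fun n : ℕ =>
            (Finsupp.single n (1 : R) - p • Finsupp.single (n + 1) (1 : R) : ℕ →₀ R)) ⊔
          (IsLocalRing.maximalIdeal R) • (⊤ : Submodule R (ℕ →₀ R)) := by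
        intro n
        have heq : (Finsupp.single n (1 : R) : ℕ →₀ R) =
            (Finsupp.single n (1 : R) - p • Finsupp.single (n + 1) (1 : R))
              + p • Finsupp.single (n + 1) (1 : R) := by abel
        rw [heq]
        refine Submodule.add_mem _ ?_ ?_
        · exact Submodule.mem_sup_left (Submodule.subset_span ⟨n, rfl⟩)
        · exact Submodule.mem_sup_right (Submodule.smul_mem_smul hp trivial)
      have : (Finsupp.single a b : ℕ →₀ R) = b • Finsupp.single a 1 := by
        rw [Finsupp.smul_single, smul_eq_mul, mul_one]
      rw [this]
      exact Submodule.smul_mem _ b (hsingle1 a)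
end

section
/- Let (R,m) be a local ring with finite residue field F = R/m, and M a direct sum of at least two nonzero cyclic R-modules. Then M is a union of |F| + 1 proper submodules, but not of any |F| or fewer proper submodules. -/
open IsLocalRing

theorem aux_no_cover {R : Type*} [CommRing R] [IsLocalRing R]
    [Finite (ResidueField R)]
    {M : Type*} [AddCommGroup M] [Module R M] :
    ∀ (k : ℕ), k ≤ Nat.card (ResidueField R) →
      ∀ C : Fin k → Submodule R M, (∀ j, C j ≠ ⊤) →
        (⋃ j, (C j : Set M)) ≠ Set.univ := by
  intro k
  induction k with
  | zero =>
    intro _ C _ h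
    have : (0 : M) ∈ (⋃ j, (C j : Set M)) := h ▸ Set.mem_univ _
    simp at this
  | succ n ih =>
    intro hk C hC hcover
    by_cases hA : ∃ j₀ : Fin (n + 1), ∀ x ∈ C j₀, ∃ i : Fin n, x ∈ C (j₀.succAbove i)
    · obtain ⟨j₀, h⟩ := hA
      refine ih (le_trans (Nat.le_succ n) hk) (fun i => C (j₀.succAbove i))
        (fun i => hC _) ?_
      apply Set.eq_univ_of_forall
      intro x
      have hx : x ∈ ⋃ j, (C j : Set M) := hcover ▸ Set.mem_univ _
      simp only [Set.mem_iUnion, SetLike.mem_coe] at hx ⊢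
      obtain ⟨j, hj⟩ := hx
      rcases eq_or_ne j j₀ with rfl | hjne
      · exact h x hj
      · obtain ⟨i, hi⟩ := Fin.exists_succAbove_eq hjne
        exact ⟨i, hi ▸ hj⟩
    · push_neg at hA
      obtain ⟨y, hy0, hy⟩ := hA 0
      have hyne : ∀ j : Fin (n + 1), j ≠ 0 → y ∉ C j := by
        intro j hj
        obtain ⟨i, hi⟩ := Fin.exists_succAbove_eq hj
        exact hi ▸ hy i
      obtain ⟨x, hx⟩ : ∃ x : M, x ∉ C 0 := by
        by_contra h
        push_neg at h
        exact hC 0 (Submodule.eq_top_iff'.mpr h)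
      obtain ⟨s, hs⟩ : ∃ s : ResidueField R → R, ∀ a, residue R (s a) = a :=
        ⟨Function.surjInv Ideal.Quotient.mk_surjective,
          Function.surjInv_eq Ideal.Quotient.mk_surjective⟩
      have hz : ∀ a : ResidueField R, ∃ j : Fin (n + 1), x + s a • y ∈ C j := by
        intro a
        have : x + s a • y ∈ ⋃ j, (C j : Set M) := hcover ▸ Set.mem_univ _
        simpa [Set.mem_iUnion] using this
      choose f hf using hz
      have hf0 : ∀ a, f a ≠ 0 := by
        intro a h
        apply hx
        have := h ▸ hf a
        have h2 : x = (x + s a • y) - s a • y := by abel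
        rw [h2]
        exact Submodule.sub_mem _ this (Submodule.smul_mem _ _ hy0)
      have hfinj : Function.Injective f := by
        intro a b hab
        by_contra hne
        have hmem : (s a - s b) • y ∈ C (f b) := by
          have h2 : (s a - s b) • y = (x + s a • y) - (x + s b • y) := by
            rw [sub_smul]; abel
          rw [h2]
          exact Submodule.sub_mem _ (hab ▸ hf a) (hf b)
        have hunit : IsUnit (s a - s b) := by
          refine notMem_maximalIdeal.mp ?_
          intro hmem'
          apply hne
          have : residue R (s a - s b) = 0 := Ideal.Quotient.eq_zero_iff_mem.mpr hmem'
          rw [map_sub, hs, hs, sub_eq_zero] at this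
          exact this
        obtain ⟨u, hu⟩ := hunit
        have : y ∈ C (f b) := by
          have : ((u⁻¹ : Rˣ) : R) • ((s a - s b) • y) ∈ C (f b) :=
            Submodule.smul_mem _ _ hmem
          rwa [← hu, smul_smul, Units.inv_mul, one_smul] at this
        exact hyne (f b) (hf0 b) this
      have ginj : Function.Injective (fun o : Option (ResidueField R) => o.elim 0 f) := by
        intro o₁ o₂ h
        match o₁, o₂ with
        | none, none => rfl
        | none, some b => exact absurd h.symm (hf0 b)
        | some a, none => exact absurd h (hf0 a)
        | some a, some b => exact congrArg _ (hfinj h)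
      have := Nat.card_le_card_of_injective _ ginj
      rw [Finite.card_option, Nat.card_eq_fintype_card (α := Fin (n + 1)),
        Fintype.card_fin] at this
      omega

theorem local_ring_cover_bound
    {R : Type*} [CommRing R] [IsLocalRing R] [Finite (IsLocalRing.ResidueField R)]
    {ι : Type*} [Nontrivial ι]
    (J : ι → Ideal R) (hJ : ∀ i, J i ≠ ⊤) :
    (∃ C : Fin (Nat.card (IsLocalRing.ResidueField R) + 1) →
        Submodule R (DirectSum ι (fun i => R ⧸ J i)),
      (∀ j, C j ≠ ⊤) ∧ (⋃ j, (C j : Set (DirectSum ι (fun i => R ⧸ J i)))) = Set.univ) ∧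
    (∀ (k : ℕ), k ≤ Nat.card (IsLocalRing.ResidueField R) →
      ∀ C : Fin k → Submodule R (DirectSum ι (fun i => R ⧸ J i)),
        (∀ j, C j ≠ ⊤) →
        (⋃ j, (C j : Set (DirectSum ι (fun i => R ⧸ J i)))) ≠ Set.univ) := by
  constructor
  · -- construction of the cover
    classical
    set M := DirectSum ι (fun i => R ⧸ J i) with hM
    obtain ⟨i₀, i₁, hne⟩ := exists_pair_ne ι
    have hle : ∀ i, J i ≤ Submodule.comap (LinearMap.id (R := R)) (maximalIdeal R) := by
      intro i
      simpa using le_maximalIdeal (hJ i)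
    let π : ∀ i, (R ⧸ J i) →ₗ[R] (ResidueField R) := fun i =>
      Submodule.mapQ (J i) (maximalIdeal R) LinearMap.id (hle i)
    let φ : M →ₗ[R] (ResidueField R) × (ResidueField R) :=
      LinearMap.prod ((π i₀).comp (DirectSum.component R ι _ i₀))
        ((π i₁).comp (DirectSum.component R ι _ i₁))
    have hφ : Function.Surjective φ := by
      rintro ⟨a, b⟩
      obtain ⟨r, hr⟩ := Ideal.Quotient.mk_surjective (I := maximalIdeal R) a
      obtain ⟨r', hr'⟩ := Ideal.Quotient.mk_surjective (I := maximalIdeal R) b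
      refine ⟨DirectSum.lof R ι (fun i => R ⧸ J i) i₀ (Ideal.Quotient.mk (J i₀) r)
        + DirectSum.lof R ι (fun i => R ⧸ J i) i₁ (Ideal.Quotient.mk (J i₁) r'), ?_⟩
      show (π i₀ ((DirectSum.component R ι (fun i => R ⧸ J i) i₀) _),
        π i₁ ((DirectSum.component R ι (fun i => R ⧸ J i) i₁) _)) = (a, b)
      simp only [map_add]
      rw [DirectSum.component.of, DirectSum.component.of,
        DirectSum.component.of, DirectSum.component.of,
        dif_pos rfl, dif_pos rfl, dif_neg hne, dif_neg hne.symm,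
        map_zero, map_zero, add_zero, zero_add]
      exact Prod.ext ((Submodule.mapQ_apply (J i₀) _ _ r).trans hr)
        ((Submodule.mapQ_apply (J i₁) _ _ r').trans hr')
    let Lo : Option (ResidueField R) → (((ResidueField R) × (ResidueField R)) →ₗ[(ResidueField R)] (ResidueField R)) := fun o =>
      o.elim (LinearMap.fst (ResidueField R) (ResidueField R) (ResidueField R)) (fun c => LinearMap.snd (ResidueField R) (ResidueField R) (ResidueField R) - c • LinearMap.fst (ResidueField R) (ResidueField R) (ResidueField R))
    let C : Option (ResidueField R) → Submodule R M := fun o =>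
      LinearMap.ker ((LinearMap.restrictScalars R (Lo o)).comp φ)
    have hCproper : ∀ o, C o ≠ ⊤ := by
      intro o h
      have hforall : ∀ m : M, Lo o (φ m) = 0 := by
        intro m
        have : m ∈ C o := h ▸ Submodule.mem_top
        simpa [C] using this
      obtain ⟨v, hv⟩ : ∃ v : (ResidueField R) × (ResidueField R), Lo o v ≠ 0 := by
        match o with
        | none => exact ⟨(1, 0), by simp [Lo]⟩
        | some c => exact ⟨(0, 1), by simp [Lo]⟩
      obtain ⟨m, hm⟩ := hφ v
      exact hv (hm ▸ hforall m)
    have hCcover : (⋃ o, (C o : Set M)) = Set.univ := by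
      apply Set.eq_univ_of_forall
      intro m
      simp only [Set.mem_iUnion, SetLike.mem_coe]
      by_cases ha : (φ m).1 = 0
      · exact ⟨none, by simp [C, Lo, ha]⟩
      · refine ⟨some ((φ m).2 / (φ m).1), ?_⟩
        simp only [C, Lo, LinearMap.mem_ker, LinearMap.coe_comp, Function.comp_apply,
          LinearMap.coe_restrictScalars, Option.elim, LinearMap.sub_apply,
          LinearMap.smul_apply, LinearMap.fst_apply, LinearMap.snd_apply, smul_eq_mul]
        field_simp
        simp
    haveI := Fintype.ofFinite (ResidueField R)
    have hcard : Nat.card (Option (ResidueField R)) = Nat.card (ResidueField R) + 1 := by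
      simp [Nat.card_eq_fintype_card]
    let e : Fin (Nat.card (ResidueField R) + 1) ≃ Option (ResidueField R) :=
      (finCongr hcard.symm).trans (Finite.equivFin (Option (ResidueField R))).symm
    refine ⟨fun j => C (e j), fun j => hCproper (e j), ?_⟩
    rw [e.surjective.iUnion_comp (fun o => (C o : Set M))]
    exact hCcover
  · exact aux_no_cover
end

section
/- Let R be a PID with fraction field F, R ≠ F, and p a nonzero prime of R. Every R-submodule of the Prüfer module M_p = R[1/p]/R is either 0, M_p itself, or of the form R·(1/p^n)/R for some n ≥ 1; in particular the submodules of M_p form a chain under inclusion. -/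
section PruferAux

variable {R : Type*} [CommRing R] [IsDomain R] [IsPrincipalIdealRing R]

lemma prufer_mk_eq_zero_iff (x : FractionRing R) :
    (Submodule.Quotient.mk x :
      (FractionRing R) ⧸ Submodule.span R {(1 : FractionRing R)}) = 0
      ↔ ∃ r : R, algebraMap R (FractionRing R) r = x := by
  rw [Submodule.Quotient.mk_eq_zero, Submodule.mem_span_singleton]
  simp [Algebra.smul_def]

lemma prufer_torsion_eq_span (p : R) (hp0 : p ≠ 0) (n : ℕ) :
    Submodule.torsionBy R
        ((FractionRing R) ⧸ Submodule.span R {(1 : FractionRing R)}) (p ^ n) =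
      Submodule.span R
        {Submodule.Quotient.mk ((algebraMap R (FractionRing R) p)⁻¹ ^ n)} := by
  have hpF : algebraMap R (FractionRing R) p ≠ 0 := by
    simpa using fun h => hp0 (IsFractionRing.injective R (FractionRing R) (by simpa using h))
  have key : (p ^ n : R) • ((algebraMap R (FractionRing R) p)⁻¹ ^ n) = 1 := by
    rw [Algebra.smul_def, map_pow, ← mul_pow, mul_inv_cancel₀ hpF, one_pow]
  apply le_antisymm
  · intro x hx
    obtain ⟨f, rfl⟩ := Submodule.Quotient.mk_surjective _ x
    rw [Submodule.mem_torsionBy_iff, ← Submodule.Quotient.mk_smul,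
      prufer_mk_eq_zero_iff] at hx
    obtain ⟨r, hr⟩ := hx
    rw [Submodule.mem_span_singleton]
    refine ⟨r, ?_⟩
    rw [← Submodule.Quotient.mk_smul]
    congr 1
    have : f = (r • ((algebraMap R (FractionRing R) p)⁻¹ ^ n)) := by
      have h2 : (p ^ n : R) • f = algebraMap R (FractionRing R) r := hr.symm
      rw [Algebra.smul_def, map_pow] at h2
      rw [Algebra.smul_def, inv_pow, eq_mul_inv_iff_mul_eq₀ (pow_ne_zero n hpF), mul_comm]
      exact h2
    rw [← this]
  · rw [Submodule.span_le, Set.singleton_subset_iff]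
    rw [SetLike.mem_coe, Submodule.mem_torsionBy_iff, ← Submodule.Quotient.mk_smul, key,
      prufer_mk_eq_zero_iff]
    exact ⟨1, map_one _⟩

end PruferAux

section PruferAux2

variable {R : Type*} [CommRing R] [IsDomain R] [IsPrincipalIdealRing R]

lemma prufer_torsion_le_span (p : R) (hp : Prime p) (m : ℕ)
    (x : (FractionRing R) ⧸ Submodule.span R {(1 : FractionRing R)})
    (hx1 : x ∈ Submodule.torsionBy R
      ((FractionRing R) ⧸ Submodule.span R {(1 : FractionRing R)}) (p ^ (m + 1)))
    (hx2 : x ∉ Submodule.torsionBy R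
      ((FractionRing R) ⧸ Submodule.span R {(1 : FractionRing R)}) (p ^ m)) :
    Submodule.torsionBy R
      ((FractionRing R) ⧸ Submodule.span R {(1 : FractionRing R)}) (p ^ (m + 1)) ≤
      Submodule.span R {x} := by
  set e : FractionRing R := (algebraMap R (FractionRing R) p)⁻¹ with he
  have hpF : algebraMap R (FractionRing R) p ≠ 0 := by
    simpa using fun h => hp.ne_zero
      (IsFractionRing.injective R (FractionRing R) (by simpa using h))
  rw [prufer_torsion_eq_span p hp.ne_zero] at hx1 ⊢
  rw [prufer_torsion_eq_span p hp.ne_zero] at hx2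
  obtain ⟨r, hr⟩ := Submodule.mem_span_singleton.mp hx1
  -- p does not divide r
  have hdvd : ¬ p ∣ r := by
    rintro ⟨t, rfl⟩
    apply hx2
    rw [Submodule.mem_span_singleton]
    refine ⟨t, ?_⟩
    rw [← hr, ← Submodule.Quotient.mk_smul, ← Submodule.Quotient.mk_smul]
    congr 1
    rw [Algebra.smul_def, Algebra.smul_def, map_mul, pow_succ]
    field_simp
  have hcop : IsCoprime r (p ^ (m + 1)) :=
    hp.irreducible.coprime_pow_of_not_dvd (m + 1) hdvd
  obtain ⟨a, b, hab⟩ := hcop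
  have hz : (p ^ (m + 1) : R) • (Submodule.Quotient.mk (e ^ (m + 1)) :
      (FractionRing R) ⧸ Submodule.span R {(1 : FractionRing R)}) = 0 := by
    rw [← Submodule.Quotient.mk_smul, prufer_mk_eq_zero_iff]
    refine ⟨1, ?_⟩
    rw [map_one, Algebra.smul_def, map_pow, he, ← mul_pow, mul_inv_cancel₀ hpF, one_pow]
  have hmem : (Submodule.Quotient.mk (e ^ (m + 1)) :
      (FractionRing R) ⧸ Submodule.span R {(1 : FractionRing R)}) ∈
      Submodule.span R {x} := by
    rw [Submodule.mem_span_singleton]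
    refine ⟨a, ?_⟩
    have h1 : a * r = 1 - b * p ^ (m + 1) := by linear_combination hab
    rw [← hr, smul_smul, h1, sub_smul, one_smul, mul_smul, hz, smul_zero, sub_zero]
  rw [Submodule.span_le, Set.singleton_subset_iff]
  exact hmem

end PruferAux2


set_option maxHeartbeats 1000000 in
theorem prufer_submodules_classification_and_chain
    (R : Type*) [CommRing R] [IsDomain R] [IsPrincipalIdealRing R]
    (hnf : ¬ IsField R) (p : R) (hp : Prime p) :
    ∀ Mp : Submodule R ((FractionRing R) ⧸ Submodule.span R {(1 : FractionRing R)}),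
      Mp = ⨆ n : ℕ, Submodule.torsionBy R
            ((FractionRing R) ⧸ Submodule.span R {(1 : FractionRing R)}) (p ^ n) →
      (∀ N : Submodule R ((FractionRing R) ⧸ Submodule.span R {(1 : FractionRing R)}),
          N ≤ Mp →
          (N = ⊥ ∨ N = Mp ∨ ∃ n : ℕ, 1 ≤ n ∧
            N = Submodule.span R
              {Submodule.Quotient.mk ((algebraMap R (FractionRing R) p)⁻¹ ^ n)})) ∧
      (∀ N N' : Submodule R ((FractionRing R) ⧸ Submodule.span R {(1 : FractionRing R)}),
          N ≤ Mp → N' ≤ Mp → N ≤ N' ∨ N' ≤ N) := by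
  intro Mp hMp
  classical
  set Q := (FractionRing R) ⧸ Submodule.span R {(1 : FractionRing R)} with hQ
  set T : ℕ → Submodule R Q := fun n => Submodule.torsionBy R Q (p ^ n) with hT
  have hmono : Monotone T := fun a b hab =>
    Submodule.torsionBy_le_torsionBy_of_dvd _ _ (pow_dvd_pow p hab)
  have hT0 : T 0 = ⊥ := by
    simp only [hT, pow_zero]
    exact Submodule.torsionBy_one
  have key : ∀ N : Submodule R Q, N ≤ Mp → N = Mp ∨ ∃ m, N = T m := by
    intro N hN
    by_cases hall : ∀ n, T n ≤ N
    · left; exact le_antisymm hN (hMp ▸ iSup_le hall)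
    · right
      push_neg at hall
      have hK0 : Nat.find hall ≠ 0 := by
        intro h
        have := Nat.find_spec hall
        rw [h, hT0] at this
        exact this bot_le
      obtain ⟨m, hm⟩ := Nat.exists_eq_succ_of_ne_zero hK0
      refine ⟨m, le_antisymm ?_ ?_⟩
      · intro x hx
        rcases eq_or_ne x 0 with rfl | hx0
        · exact zero_mem _
        · have hex : ∃ n, x ∈ T n := by
            have hx' : x ∈ Mp := hN hx
            rw [hMp] at hx'
            exact (Submodule.mem_iSup_of_directed _ hmono.directed_le).mp hx'
          have hn0 : Nat.find hex ≠ 0 := by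
            intro h
            have := Nat.find_spec hex
            rw [h, hT0] at this
            exact hx0 this
          obtain ⟨j, hj⟩ := Nat.exists_eq_succ_of_ne_zero hn0
          have hxj1 : x ∈ T (j + 1) := by
            have := Nat.find_spec hex
            rwa [hj] at this
          have hxj : x ∉ T j := Nat.find_min hex (by omega)
          have hle : T (j + 1) ≤ N :=
            le_trans (prufer_torsion_le_span p hp j x hxj1 hxj)
              (Submodule.span_le.mpr (Set.singleton_subset_iff.mpr hx))
          have hjm : j + 1 ≤ m := by
            by_contra hc
            push_neg at hc
            have hfind : ¬ T (Nat.find hall) ≤ N := Nat.find_spec hall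
            exact hfind (le_trans (hmono (by omega : Nat.find hall ≤ j + 1)) hle)
          exact hmono hjm hxj1
      · have := Nat.find_min hall (m := m) (by omega)
        exact not_not.mp this
  refine ⟨?_, ?_⟩
  · intro N hN
    rcases key N hN with h | ⟨m, hm⟩
    · exact Or.inr (Or.inl h)
    · rcases Nat.eq_zero_or_pos m with rfl | hm1
      · exact Or.inl (hm.trans hT0)
      · refine Or.inr (Or.inr ⟨m, hm1, ?_⟩)
        rw [hm, hT]
        exact prufer_torsion_eq_span p hp.ne_zero m
  · intro N N' hN hN'
    rcases key N hN with h | ⟨a, ha⟩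
    · exact Or.inr (h ▸ hN')
    · rcases key N' hN' with h' | ⟨b, hb⟩
      · exact Or.inl (h' ▸ hN)
      · rcases le_total a b with hab | hab
        · exact Or.inl (ha ▸ hb ▸ hmono hab)
        · exact Or.inr (ha ▸ hb ▸ hmono hab)
end

section
/- Let R be a PID with fraction field F, R ≠ F. Then F, as an R-module, is not a union of finitely many proper R-submodules, but it is a countable union of proper R-submodules. -/
section Aux

variable (R : Type*) [CommRing R] [IsDomain R] [IsPrincipalIdealRing R]

/-- A submodule of the fraction field with finite quotient is everything. -/
private lemma quot_finite_eq_top (hnf : ¬ IsField R) (C : Submodule R (FractionRing R))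
    (hfin : Finite (FractionRing R ⧸ C)) : C = ⊤ := by
  by_contra hC
  have hx : ∃ x, x ∉ C := by
    by_contra h; push_neg at h; exact hC (Submodule.eq_top_iff'.mpr h)
  obtain ⟨x, hx⟩ := hx
  set m : FractionRing R ⧸ C := Submodule.Quotient.mk x with hmdef
  have hm : m ≠ 0 := by simpa [hmdef, Submodule.Quotient.mk_eq_zero] using hx
  set f := LinearMap.toSpanSingleton R (FractionRing R ⧸ C) m with hfdef
  have hker : LinearMap.ker f ≠ ⊥ := by
    intro h
    have hinj : Function.Injective f := LinearMap.ker_eq_bot.mp h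
    have : Finite R := Finite.of_injective f hinj
    exact hnf (Finite.isField_of_domain R)
  obtain ⟨a, haker, ha0⟩ := Submodule.exists_mem_ne_zero_of_ne_bot hker
  have ham : a • m = 0 := by
    simpa [hfdef, LinearMap.toSpanSingleton_apply] using haker
  have halg : algebraMap R (FractionRing R) a ≠ 0 := fun h =>
    ha0 (IsFractionRing.to_map_eq_zero_iff.mp h)
  have hsurj : Function.Surjective (fun y : FractionRing R ⧸ C => a • y) := by
    intro y
    obtain ⟨z, rfl⟩ := Submodule.Quotient.mk_surjective C y
    refine ⟨Submodule.Quotient.mk ((algebraMap R (FractionRing R) a)⁻¹ * z), ?_⟩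
    show a • (Submodule.Quotient.mk _ : FractionRing R ⧸ C) = Submodule.Quotient.mk z
    rw [← Submodule.Quotient.mk_smul]
    congr 1
    rw [Algebra.smul_def, ← mul_assoc, mul_inv_cancel₀ halg, one_mul]
  have hinj : Function.Injective (fun y : FractionRing R ⧸ C => a • y) :=
    Finite.injective_iff_surjective.mpr hsurj
  exact hm (by simpa using hinj (show a • m = a • (0 : FractionRing R ⧸ C) by simpa using ham))

variable {R}

/-- submodule of elements writable with denominator `b * p ^ n`, `p ∤ b`. -/
private def Dmod (p : R) (hp : Prime p) (n : ℕ) : Submodule R (FractionRing R) where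
  carrier := {x | ∃ b c : R, ¬ p ∣ b ∧ (b * p ^ n) • x = algebraMap R (FractionRing R) c}
  zero_mem' := ⟨1, 0, fun h => hp.not_unit (isUnit_of_dvd_one h), by simp⟩
  add_mem' := by
    rintro x y ⟨b, c, hb, hbc⟩ ⟨b', c', hb', hbc'⟩
    refine ⟨b * b', b' * c + b * c', fun h => ((hp.2.2 _ _ h).elim hb hb'), ?_⟩
    simp only [Algebra.smul_def, map_mul, map_add, map_pow] at *
    ring_nf
    ring_nf at hbc hbc'
    linear_combination (algebraMap R (FractionRing R) b') * hbc +
      (algebraMap R (FractionRing R) b) * hbc'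
  smul_mem' := by
    rintro r x ⟨b, c, hb, hbc⟩
    refine ⟨b, r * c, hb, ?_⟩
    simp only [Algebra.smul_def, map_mul, map_pow] at *
    linear_combination (algebraMap R (FractionRing R) r) * hbc

private lemma Dmod_ne_top (p : R) (hp : Prime p) (n : ℕ) : Dmod p hp n ≠ ⊤ := by
  intro htop
  set F := FractionRing R
  have hpn : algebraMap R F (p ^ (n + 1)) ≠ 0 := fun h =>
    pow_ne_zero _ hp.ne_zero (IsFractionRing.to_map_eq_zero_iff.mp h)
  have hmem : (algebraMap R F (p ^ (n + 1)))⁻¹ ∈ Dmod p hp n := htop ▸ Submodule.mem_top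
  obtain ⟨b, c, hb, hbc⟩ := hmem
  rw [Algebra.smul_def] at hbc
  have key : algebraMap R F (b * p ^ n) = algebraMap R F (c * p ^ (n + 1)) := by
    have h2 := congrArg (· * algebraMap R F (p ^ (n + 1))) hbc
    rw [mul_assoc, inv_mul_cancel₀ hpn, mul_one, ← map_mul] at h2
    exact h2
  have : b * p ^ n = c * p ^ (n + 1) := IsFractionRing.injective R F key
  apply hb
  refine ⟨c, mul_left_cancel₀ (pow_ne_zero n hp.ne_zero) ?_⟩
  rw [mul_comm (p ^ n) b, this, pow_succ]; ring

private lemma Dmod_covers (p : R) (hp : Prime p) (x : FractionRing R) :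
    ∃ n, x ∈ Dmod p hp n := by
  obtain ⟨⟨a, s⟩, hx⟩ := IsLocalization.mk'_surjective (nonZeroDivisors R) x
  have hs0 : (s : R) ≠ 0 := nonZeroDivisors.coe_ne_zero s
  have hfin := FiniteMultiplicity.of_prime_left hp hs0
  obtain ⟨b, hs, hb⟩ := hfin.exists_eq_pow_mul_and_not_dvd
  refine ⟨multiplicity p (s : R), b, a, hb, ?_⟩
  rw [Algebra.smul_def, show b * p ^ multiplicity p (s : R) = (s : R) by
    rw [mul_comm]; exact hs.symm, ← hx]
  exact IsLocalization.mk'_spec' _ a s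

end Aux

theorem fractionField_not_finite_union_but_countable_union
    (R : Type*) [CommRing R] [IsDomain R] [IsPrincipalIdealRing R]
    (hnf : ¬ IsField R) :
    (∀ (k : ℕ) (C : Fin k → Submodule R (FractionRing R)),
        (∀ i, C i ≠ ⊤) → (⋃ i, (C i : Set (FractionRing R))) ≠ Set.univ) ∧
    (∃ C : ℕ → Submodule R (FractionRing R),
        (∀ n, C n ≠ ⊤) ∧ (⋃ n, (C n : Set (FractionRing R))) = Set.univ) := by
  constructor
  · intro k C hC hcov
    have hcov' : ⋃ i ∈ (Finset.univ : Finset (Fin k)), ((C i : Set (FractionRing R)))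
        = Set.univ := by simpa using hcov
    obtain ⟨i, -, hfi⟩ := Submodule.exists_finiteIndex_of_cover hcov'
    have : Finite (FractionRing R ⧸ C i) := AddSubgroup.finite_quotient_of_finiteIndex
    exact hC i (quot_finite_eq_top R hnf _ this)
  · obtain ⟨P, hPbot, hPprime⟩ := Ring.not_isField_iff_exists_prime.mp hnf
    haveI := hPprime
    have hp : Prime (Submodule.IsPrincipal.generator P) :=
      Submodule.IsPrincipal.prime_generator_of_isPrime P hPbot
    refine ⟨fun n => Dmod _ hp n, fun n => Dmod_ne_top _ hp n, ?_⟩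
    rw [Set.iUnion_eq_univ_iff]
    intro x
    obtain ⟨n, hn⟩ := Dmod_covers _ hp x
    exact ⟨n, hn⟩
end

section
/- Let R be a PID with fraction field F, R ≠ F, and M a proper R-submodule of F. Then M + R·1 ≠ F. -/
theorem submodule_sup_span_one_ne_top
    (R : Type*) [CommRing R] [IsDomain R] [IsPrincipalIdealRing R]
    (hnf : ¬ IsField R)
    (M : Submodule R (FractionRing R)) (hM : M ≠ ⊤) :
    M ⊔ Submodule.span R {(1 : FractionRing R)} ≠ ⊤ := by
  intro htop
  apply hM
  set F := FractionRing R
  -- key: for every nonzero r, there is c with (1 - r*c) • 1 ∈ M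
  have key : ∀ r : R, r ≠ 0 → ∃ c : R, (1 - r * c) • (1 : F) ∈ M := by
    intro r hr
    have hx : ((algebraMap R F r)⁻¹ : F) ∈ M ⊔ Submodule.span R {(1:F)} := by
      rw [htop]; exact Submodule.mem_top
    obtain ⟨m, hm, y, hy, hmy⟩ := Submodule.mem_sup.mp hx
    obtain ⟨c, rfl⟩ := Submodule.mem_span_singleton.mp hy
    refine ⟨c, ?_⟩
    have hr' : algebraMap R F r ≠ 0 :=
      (map_ne_zero_iff _ (IsFractionRing.injective R F)).mpr hr
    have h1 : (1 : F) = algebraMap R F r * (m + c • 1) := by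
      rw [hmy, mul_inv_cancel₀ hr']
    have h2 : (1 - r * c) • (1 : F) = r • m := by
      simp only [Algebra.smul_def, map_sub, map_mul, map_one] at h1 ⊢
      linear_combination h1
    rw [h2]
    exact M.smul_mem r hm
  set I : Ideal R := M.comap (Algebra.linearMap R F) with hI
  have hmemI : ∀ r : R, r ∈ I ↔ (r : R) • (1 : F) ∈ M := by
    intro r
    simp [hI, Algebra.smul_def, Submodule.mem_comap, Algebra.linearMap_apply]
  obtain ⟨a, ha⟩ := (IsPrincipalIdealRing.principal I).principal
  by_cases ha0 : a = 0
  · -- I = 0: pick nonzero nonunit, contradiction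
    obtain ⟨r, hr0, hru⟩ := Ring.exists_not_isUnit_of_not_isField hnf
    obtain ⟨c, hc⟩ := key r hr0
    have : (1 - r * c) ∈ I := (hmemI _).mpr hc
    rw [ha, ha0] at this
    simp only [Submodule.span_singleton_eq_bot.mpr rfl, Submodule.mem_bot] at this
    exact (hru (IsUnit.of_mul_eq_one (a := r) c (by linear_combination -this))).elim
  · obtain ⟨c, hc⟩ := key a ha0
    have h3 : (1 - a * c) ∈ I := (hmemI _).mpr hc
    rw [ha, Submodule.mem_span_singleton] at h3
    obtain ⟨d, hd⟩ := h3
    rw [smul_eq_mul] at hd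
    have h1I : (1 : R) ∈ I := by
      rw [ha, Submodule.mem_span_singleton]
      exact ⟨d + c, by rw [smul_eq_mul]; linear_combination hd⟩
    have h1M : (1 : F) ∈ M := by
      have := (hmemI 1).mp h1I
      simpa using this
    have hle : Submodule.span R {(1:F)} ≤ M :=
      Submodule.span_le.mpr (by simpa using h1M)
    rw [← htop, sup_eq_left.mpr hle]
end
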